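/- Let X_1, ..., X_n be vectors in ℝ^d with ‖X_t‖_2 ≤ L for all t, and let V be a d×d positive definite real matrix. Define V̄_t = V + ∑_{s=1}^t X_s X_sᵀ for 0 ≤ t ≤ n. Then ∑_{t=1}^n min{1, ‖X_t‖²_{V̄_{t-1}^{-1}}} ≤ 2(log det(V̄_n) − log det(V)) ≤ 2(d·log((trace(V) + n L²)/d) − log det(V)). -/

import Mathlib

open Matrix Finset

/-- The weighted norm `‖x‖_A = √(xᵀ A x)`. -/
noncomputable def quadNorm {d : ℕ} (A : Matrix (Fin d) (Fin d) ℝ) (x : Fin d → ℝ) : ℝ :=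
  Real.sqrt (x ⬝ᵥ A *ᵥ x)

/-- The Euclidean (ℓ₂) norm of a vector in ℝ^d. -/
noncomputable def l2norm {d : ℕ} (x : Fin d → ℝ) : ℝ :=
  Real.sqrt (∑ i, x i ^ 2)

lemma min_le_two_log {u : ℝ} (hu : 0 ≤ u) : min 1 u ≤ 2 * Real.log (1 + u) := by
  rcases le_total u 1 with h | h
  · rw [min_eq_right h]
    have hlow : u / (1 + u) ≤ Real.log (1 + u) := by
      have h0 := Real.log_le_sub_one_of_pos (x := (1+u)⁻¹) (by positivity)
      rw [Real.log_inv] at h0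
      have h1 : 1 - (1+u)⁻¹ ≤ Real.log (1+u) := by linarith
      calc u / (1+u) = 1 - (1+u)⁻¹ := by field_simp; ring
        _ ≤ _ := h1
    have h2 : u / 2 ≤ u / (1 + u) :=
      div_le_div_of_nonneg_left hu (by linarith) (by linarith)
    linarith
  · rw [min_eq_left h]
    have hl2 : (1:ℝ)/2 < Real.log 2 := by
      have := Real.log_two_gt_d9; linarith
    have : Real.log 2 ≤ Real.log (1 + u) :=
      Real.log_le_log (by norm_num) (by linarith)
    linarith

lemma psd_vecMulVec {d : ℕ} (x : Fin d → ℝ) : (vecMulVec x x).PosSemidef := by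
  refine Matrix.PosSemidef.of_dotProduct_mulVec_nonneg ?_ ?_
  · ext i j; simp [vecMulVec_apply, IsHermitian, conjTranspose_apply, mul_comm]
  · intro y
    have h : y ⬝ᵥ (vecMulVec x x) *ᵥ y = (x ⬝ᵥ y) * (x ⬝ᵥ y) := by
      simp [vecMulVec_apply, dotProduct, mulVec, Finset.mul_sum, Finset.sum_mul, mul_assoc,
        mul_comm, mul_left_comm]
    simp only [star_trivial, h]
    exact mul_self_nonneg _

lemma trace_vecMulVec {d : ℕ} (x : Fin d → ℝ) : (vecMulVec x x).trace = ∑ i, x i ^ 2 := by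
  simp [Matrix.trace, Matrix.diag, vecMulVec_apply, sq]

lemma det_rank_one_update {d : ℕ} {A : Matrix (Fin d) (Fin d) ℝ} (hA : A.PosDef)
    (x : Fin d → ℝ) :
    (A + vecMulVec x x).det = A.det * (1 + x ⬝ᵥ A⁻¹ *ᵥ x) := by
  have h0 : A * A⁻¹ = 1 := Matrix.mul_nonsing_inv A hA.det_pos.ne'.isUnit
  have h1 : A + vecMulVec x x
      = A * (1 + replicateCol (Fin 1) (A⁻¹ *ᵥ x) * replicateRow (Fin 1) x) := by
    rw [Matrix.mul_add, Matrix.mul_one, Matrix.replicateCol_mulVec, ← Matrix.mul_assoc,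
      ← Matrix.mul_assoc, h0, Matrix.one_mul, vecMulVec_eq (Fin 1)]
    rfl
  rw [h1, Matrix.det_mul]
  erw [Matrix.det_one_add_replicateCol_mul_replicateRow]

lemma trace_eq_sum_eigenvalues {d : ℕ} {A : Matrix (Fin d) (Fin d) ℝ}
    (hA : A.IsHermitian) : A.trace = ∑ i, hA.eigenvalues i := by
  nth_rewrite 1 [hA.spectral_theorem]
  rw [Unitary.conjStarAlgAut_apply, Matrix.trace_mul_cycle, Unitary.coe_star_mul_self, Matrix.one_mul, Matrix.trace_diagonal]
  simp

lemma log_det_le_trace {d : ℕ} (hd : 0 < d) {A : Matrix (Fin d) (Fin d) ℝ} (hA : A.PosDef) :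
    Real.log A.det ≤ d * Real.log (A.trace / d) := by
  have hH := hA.isHermitian
  have hev : ∀ i, 0 < hH.eigenvalues i := hA.eigenvalues_pos
  have hdet : A.det = ∏ i, hH.eigenvalues i := by simpa using hH.det_eq_prod_eigenvalues
  have htr : A.trace = ∑ i, hH.eigenvalues i := trace_eq_sum_eigenvalues hH
  have hd' : (0:ℝ) < d := by exact_mod_cast hd
  have hJ := (strictConcaveOn_log_Ioi.concaveOn).le_map_sum
    (w := fun _ : Fin d => (d:ℝ)⁻¹) (p := hH.eigenvalues) (t := univ)
    (fun i _ => by positivity)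
    (by simp [Finset.card_univ]; field_simp)
    (fun i _ => Set.mem_Ioi.2 (hev i))
  simp only [smul_eq_mul, ← Finset.mul_sum] at hJ
  rw [hdet, Real.log_prod (fun i _ => (hev i).ne'), htr, div_eq_inv_mul]
  calc ∑ i, Real.log (hH.eigenvalues i)
      = d * ((d:ℝ)⁻¹ * ∑ i, Real.log (hH.eigenvalues i)) := by field_simp
    _ ≤ d * Real.log ((d:ℝ)⁻¹ * ∑ i, hH.eigenvalues i) :=
        mul_le_mul_of_nonneg_left hJ hd'.le

/-- Elliptical potential lemma (Lemma 11 in Abbasi-Yadkori et al., second part). -/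
theorem stmt1 {d : ℕ} (n : ℕ) (L : ℝ) (X : ℕ → Fin d → ℝ)
    (hX : ∀ t < n, l2norm (X t) ≤ L)
    (V : Matrix (Fin d) (Fin d) ℝ) (hV : V.PosDef)
    (Vbar : ℕ → Matrix (Fin d) (Fin d) ℝ)
    (hVbar : ∀ t, Vbar t = V + ∑ s ∈ Finset.range t, vecMulVec (X s) (X s)) :
    ∑ t ∈ Finset.range n, min 1 ((quadNorm ((Vbar t)⁻¹) (X t)) ^ 2) ≤
        2 * (Real.log (Vbar n).det - Real.log V.det) ∧
      2 * (Real.log (Vbar n).det - Real.log V.det) ≤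
        2 * ((d : ℝ) * Real.log ((V.trace + n * L ^ 2) / d) - Real.log V.det) := by
  have hPD : ∀ t, (Vbar t).PosDef := by
    intro t
    rw [hVbar t]
    refine hV.add_posSemidef ?_
    exact Finset.sum_induction _ _ (fun a b ha hb => ha.add hb) (Matrix.PosSemidef.zero)
      (fun s _ => psd_vecMulVec (X s))
  set q : ℕ → ℝ := fun t => X t ⬝ᵥ (Vbar t)⁻¹ *ᵥ X t with hqdef
  have hq : ∀ t, 0 ≤ q t := by
    intro t
    have := ((hPD t).inv).posSemidef.dotProduct_mulVec_nonneg (X t)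
    simpa using this
  have hdetpos : ∀ t, 0 < (Vbar t).det := fun t => (hPD t).det_pos
  have hV0 : Vbar 0 = V := by simp [hVbar 0]
  have hlog : ∀ t, Real.log (Vbar (t+1)).det - Real.log (Vbar t).det
      = Real.log (1 + q t) := by
    intro t
    have hstep : Vbar (t+1) = Vbar t + vecMulVec (X t) (X t) := by
      rw [hVbar, hVbar, Finset.sum_range_succ, add_assoc]
    have h1q : (0:ℝ) < 1 + q t := by have := hq t; linarith
    rw [hstep, det_rank_one_update (hPD t), Real.log_mul (hdetpos t).ne' h1q.ne']
    ring
  have hqn : ∀ t, (quadNorm ((Vbar t)⁻¹) (X t)) ^ 2 = q t := fun t =>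
    Real.sq_sqrt (hq t)
  constructor
  · calc ∑ t ∈ Finset.range n, min 1 ((quadNorm ((Vbar t)⁻¹) (X t)) ^ 2)
        ≤ ∑ t ∈ Finset.range n, 2 * Real.log (1 + q t) := by
          refine Finset.sum_le_sum fun t _ => ?_
          rw [hqn t]
          exact min_le_two_log (hq t)
      _ = 2 * ∑ t ∈ Finset.range n,
            (Real.log (Vbar (t+1)).det - Real.log (Vbar t).det) := by
          rw [Finset.mul_sum]
          exact Finset.sum_congr rfl fun t _ => by rw [hlog t]
      _ = 2 * (Real.log (Vbar n).det - Real.log V.det) := by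
          rw [Finset.sum_range_sub (fun t => Real.log (Vbar t).det), hV0]
  · rcases Nat.eq_zero_or_pos d with hd | hd
    · subst hd
      simp [Matrix.det_isEmpty]
    · have hd' : (0:ℝ) < d := by exact_mod_cast hd
      have h1 := log_det_le_trace hd (hPD n)
      have htrb : (Vbar n).trace ≤ V.trace + n * L ^ 2 := by
        rw [hVbar n, Matrix.trace_add, Matrix.trace_sum]
        have : ∑ s ∈ Finset.range n, (vecMulVec (X s) (X s)).trace ≤
            ∑ s ∈ Finset.range n, L ^ 2 := by
          refine Finset.sum_le_sum fun s hs => ?_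
          rw [_root_.trace_vecMulVec]
          have hs' : ∑ i, X s i ^ 2 = (l2norm (X s)) ^ 2 :=
            (Real.sq_sqrt (Finset.sum_nonneg fun i _ => sq_nonneg _)).symm
          rw [hs']
          have h0 : 0 ≤ l2norm (X s) := Real.sqrt_nonneg _
          exact pow_le_pow_left₀ h0 (hX s (Finset.mem_range.mp hs)) 2
        simpa [Finset.sum_const, Finset.card_range, nsmul_eq_mul] using
          add_le_add_left this V.trace
      have htrpos : 0 < (Vbar n).trace := by
        have hne : Nonempty (Fin d) := Fin.pos_iff_nonempty.mp hd
        rw [trace_eq_sum_eigenvalues (hPD n).isHermitian]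
        exact Finset.sum_pos (fun i _ => (hPD n).eigenvalues_pos i) Finset.univ_nonempty
      have h2 : Real.log ((Vbar n).trace / d) ≤ Real.log ((V.trace + n * L ^ 2) / d) :=
        Real.log_le_log (div_pos htrpos hd') (by gcongr)
      have h3 : (d:ℝ) * Real.log ((Vbar n).trace / d) ≤
          (d:ℝ) * Real.log ((V.trace + n * L ^ 2) / d) :=
        mul_le_mul_of_nonneg_left h2 hd'.le
      linarith
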